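/- Specializing q = 1, the relations defining the quantum super Grassmannian Gr_q become the classical super Plücker relations and commutativity: the quotient Gr_q/(q − 1) is a commutative superalgebra, the commutation relations D_{ij}D_{kl} = q^{±1 or ±2}D_{kl}D_{ij} (and the mixed relations) all reduce to supercommutativity (with D_{i5} odd and the rest even), and the quantum Plücker relations D₁₂D₃₄ − q⁻¹D₁₃D₂₄ + q⁻²D₁₄D₂₃ = 0, D_{ij}D_{k5} − q⁻¹D_{ik}D_{j5} + q⁻²D_{i5}D_{jk} = 0, D_{i5}D_{j5} = qD_{ij}D₅₅ reduce to the classical super Plücker relations q₁₂q₃₄ − q₁₃q₂₄ + q₁₄q₂₃ = 0, q_{ij}λ_k − q_{ik}λ_j + q_{jk}λ_i = 0, λ_iλ_j = a₅₅q_{ij}. -/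

import Mathlib

noncomputable section

open LaurentPolynomial

/-- The ground ring ℂ[q,q⁻¹]. -/
abbrev kq : Type := LaurentPolynomial ℂ

/-- q as a unit of ℂ[q,q⁻¹]. -/
def qu : kqˣ := (LaurentPolynomial.isUnit_T (R := ℂ) 1).unit

/-- q as an element of ℂ[q,q⁻¹]. -/
def qc : kq := (qu : kq)

/-- q⁻¹ as an element of ℂ[q,q⁻¹]. -/
def qi : kq := ((qu⁻¹ : kqˣ) : kq)

/-- Index set for the generators X_{ij} (pairs i<j of Fin 5) and X₅₅ (Unit);
the pair (i,5) (i.e. second index `4 : Fin 5`) is odd, all others even. -/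
abbrev GIdx : Type := {p : Fin 5 × Fin 5 // p.1 < p.2} ⊕ Unit

/-- Free ℂ[q,q⁻¹]-algebra on the Grassmannian generators. -/
abbrev FG : Type := FreeAlgebra kq GIdx

/-- The generator X_{ij} (zero if not i<j, a harmless convention). -/
def X (i j : Fin 5) : FG :=
  if h : i < j then FreeAlgebra.ι kq (Sum.inl ⟨(i, j), h⟩) else 0

/-- The generator X₅₅. -/
def X5 : FG := FreeAlgebra.ι kq (Sum.inr ())

/-- The defining relations of the quantum super Grassmannian Gr_q: the
commutation relations and the quantum super Plücker relations. -/
inductive GRel : FG → FG → Prop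
  | c1 (i j k l : Fin 5) : i < j → k < l → (i < k ∨ (i = k ∧ j < l)) →
      (i = k ∨ i = l ∨ j = k ∨ j = l) → ¬(j = 4 ∧ l = 4) →
      GRel (X i j * X k l) (qi • (X k l * X i j))
  | c2 (i j k l : Fin 5) : i < j → j < k → k < l →
      GRel (X i j * X k l) ((qi * qi) • (X k l * X i j))
  | c3 (i j k l : Fin 5) : i < k → k < j → j < l →
      GRel (X i j * X k l) ((qi * qi) • (X k l * X i j) - (qi - qc) • (X i k * X j l))
  | c4 (i j k l : Fin 5) : i < k → k < l → l < j →
      GRel (X i j * X k l) (X k l * X i j)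
  | c5 (i j : Fin 5) : i < j → j ≠ 4 →
      GRel (X i j * X5) ((qi * qi) • (X5 * X i j))
  | c6 (i j : Fin 5) : i < j → j ≠ 4 →
      GRel (X i 4 * X j 4) (-(qc • (X j 4 * X i 4)))
  | c6sq (i : Fin 5) : i ≠ 4 → GRel (X i 4 * X i 4) 0
  | c7a (i : Fin 5) : i ≠ 4 → GRel (X i 4 * X5) 0
  | c7b (i : Fin 5) : i ≠ 4 → GRel (X5 * X i 4) 0
  | p1 : GRel (X 0 1 * X 2 3 - qi • (X 0 2 * X 1 3) + (qi * qi) • (X 0 3 * X 1 2)) 0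
  | p2 (i j k : Fin 5) : i < j → j < k → k ≠ 4 →
      GRel (X i j * X k 4 - qi • (X i k * X j 4) + (qi * qi) • (X i 4 * X j k)) 0
  | p3 (i j : Fin 5) : i < j → j ≠ 4 →
      GRel (X i 4 * X j 4) (qc • (X i j * X5))

/-- The relations of Gr_q together with the specialization q = 1. -/
def GRel1 : FG → FG → Prop := fun x y =>
  GRel x y ∨ (x = algebraMap kq FG (LaurentPolynomial.T 1) ∧ y = 1)

/-- The quotient Gr_q/(q−1). -/
abbrev GrqAtOne : Type := RingQuot GRel1

/-- Free ℂ-algebra on the same generators, for the classical super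
Grassmannian ring. -/
abbrev FC : Type := FreeAlgebra ℂ GIdx

/-- The classical generator q_{ij} resp. λ_i (for j = 5). -/
def Y (i j : Fin 5) : FC :=
  if h : i < j then FreeAlgebra.ι ℂ (Sum.inl ⟨(i, j), h⟩) else 0

/-- The classical generator a₅₅. -/
def Y5 : FC := FreeAlgebra.ι ℂ (Sum.inr ())

/-- The defining relations of the classical super Grassmannian ring O(Gr):
supercommutativity (the λ_i = Y i 4 are odd, the rest even) together with the
classical super Plücker relations. -/
inductive CRel : FC → FC → Prop
  | comm (i j k l : Fin 5) : i < j → k < l → ¬(j = 4 ∧ l = 4) →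
      CRel (Y i j * Y k l) (Y k l * Y i j)
  | comm5 (i j : Fin 5) : i < j → CRel (Y i j * Y5) (Y5 * Y i j)
  | acomm (i j : Fin 5) : i ≠ 4 → j ≠ 4 →
      CRel (Y i 4 * Y j 4) (-(Y j 4 * Y i 4))
  | oddsq (i : Fin 5) : i ≠ 4 → CRel (Y i 4 * Y i 4) 0
  | p1 : CRel (Y 0 1 * Y 2 3 - Y 0 2 * Y 1 3 + Y 0 3 * Y 1 2) 0
  | p2 (i j k : Fin 5) : i < j → j < k → k ≠ 4 →
      CRel (Y i j * Y k 4 - Y i k * Y j 4 + Y j k * Y i 4) 0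
  | p3 (i j : Fin 5) : i < j → j ≠ 4 → CRel (Y i 4 * Y j 4) (Y5 * Y i j)
  | p4 (i : Fin 5) : i ≠ 4 → CRel (Y i 4 * Y5) 0

/-- The classical super Grassmannian ring O(Gr). -/
abbrev OGr : Type := RingQuot CRel

/-- The projection Gr_q → Gr_q/(q−1). -/
def φ : FG →+* GrqAtOne := RingQuot.mkRingHom GRel1


/-! ### Auxiliary material for the proof -/

/-- Evaluation of Laurent polynomials at q = 1. -/
def ev1 : kq →ₐ[ℂ] ℂ := (AddMonoidAlgebra.lift ℂ ℂ ℤ) 1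

lemma ev1_single (n : ℤ) (c : ℂ) : ev1 (AddMonoidAlgebra.single n c) = c := by
  rw [ev1, AddMonoidAlgebra.lift_single]; simp

lemma ev1_T (n : ℤ) : ev1 (LaurentPolynomial.T n) = 1 := ev1_single n 1

lemma ev1_algebraMap (c : ℂ) : ev1 (algebraMap ℂ kq c) = c := ev1.commutes c

lemma qc_eq : qc = LaurentPolynomial.T 1 := (LaurentPolynomial.isUnit_T 1).unit_spec

lemma qi_mul_qc : qi * qc = 1 := by
  rw [qi, qc, ← Units.val_mul, inv_mul_cancel, Units.val_one]

lemma ev1_qc : ev1 qc = 1 := by rw [qc_eq]; exact ev1_T 1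

lemma ev1_qi : ev1 qi = 1 := by
  have h := congrArg ev1 qi_mul_qc
  rwa [map_mul, ev1_qc, mul_one, map_one] at h

lemma ev1_qi2 : ev1 (qi * qi) = 1 := by rw [map_mul, ev1_qi, one_mul]

lemma ev1_qd : ev1 (qi - qc) = 0 := by rw [map_sub, ev1_qi, ev1_qc, sub_self]

lemma le4 (a : Fin 5) : a ≤ 4 := by omega
lemma ne4_of_lt {a b : Fin 5} (h : a < b) : a ≠ 4 := by omega
lemma lt4_of_lt {a b : Fin 5} (h : a < b) : a < 4 := by omega
lemma lt4_of_ne {a : Fin 5} (h : a ≠ 4) : a < 4 := by omega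

lemma grel {x y : FG} (h : GRel x y) : φ x = φ y :=
  RingQuot.mkRingHom_rel (Or.inl h)

lemma phi_T1 : φ (algebraMap kq FG (LaurentPolynomial.T 1)) = 1 := by
  have h : GRel1 (algebraMap kq FG (LaurentPolynomial.T 1)) 1 := Or.inr ⟨rfl, rfl⟩
  have h2 := RingQuot.mkRingHom_rel h
  rw [show RingQuot.mkRingHom GRel1 = φ from rfl, map_one] at h2
  exact h2

lemma phi_Tm1 : φ (algebraMap kq FG (LaurentPolynomial.T (-1))) = 1 := by
  have h : LaurentPolynomial.T (R := ℂ) (-1) * LaurentPolynomial.T 1 = 1 := by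
    rw [← LaurentPolynomial.T_add]; norm_num
  have h2 := congrArg (fun a : kq => φ (algebraMap kq FG a)) h
  simp only [map_mul, map_one, phi_T1, mul_one] at h2
  exact h2

lemma phi_Tn (n : ℤ) : φ (algebraMap kq FG (LaurentPolynomial.T n)) = 1 := by
  induction n using Int.induction_on with
  | zero => simp [LaurentPolynomial.T_zero]
  | succ n ih =>
      rw [LaurentPolynomial.T_add, map_mul, map_mul, ih, phi_T1, one_mul]
  | pred n ih =>
      have : (-(n : ℤ) - 1) = (-(n : ℤ)) + (-1) := by ring
      rw [this, LaurentPolynomial.T_add, map_mul, map_mul, ih, phi_Tm1, one_mul]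

lemma phi_algC (c : ℂ) : φ (algebraMap ℂ FG c) = algebraMap ℂ GrqAtOne c := by
  have h : φ (algebraMap ℂ FG c) = RingQuot.mkAlgHom ℂ GRel1 (algebraMap ℂ FG c) :=
    (RingHom.congr_fun (RingQuot.mkAlgHom_coe ℂ GRel1) _).symm
  rw [h, AlgHom.commutes]

lemma phi_alg (a : kq) : φ (algebraMap kq FG a) = algebraMap ℂ GrqAtOne (ev1 a) := by
  have h : (φ.comp (algebraMap kq FG)) = (algebraMap ℂ GrqAtOne).comp ev1.toRingHom := by
    apply AddMonoidAlgebra.ringHom_ext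
    · intro b
      have hb : (AddMonoidAlgebra.single (0 : ℤ) b : kq) = algebraMap ℂ kq b := rfl
      simp only [RingHom.comp_apply, AlgHom.toRingHom_eq_coe, RingHom.coe_coe, hb]
      rw [← IsScalarTower.algebraMap_apply ℂ kq FG, phi_algC, ev1_algebraMap]
    · intro n
      have hn : (AddMonoidAlgebra.single (n : ℤ) (1 : ℂ) : kq) = LaurentPolynomial.T n := rfl
      simp only [RingHom.comp_apply, AlgHom.toRingHom_eq_coe, RingHom.coe_coe, hn]
      rw [phi_Tn, ev1_T, map_one]
  exact RingHom.congr_fun h a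

lemma phi_smul (a : kq) (x : FG) :
    φ (a • x) = algebraMap ℂ GrqAtOne (ev1 a) * φ x := by
  rw [Algebra.smul_def, map_mul, phi_alg]

lemma phi_comm_aux (i j k l : Fin 5) (hij : i < j) (hkl : k < l)
    (hlex : i < k ∨ (i = k ∧ j < l)) (h4 : ¬(j = 4 ∧ l = 4)) :
    φ (X i j * X k l) = φ (X k l * X i j) := by
  by_cases hsh : i = k ∨ i = l ∨ j = k ∨ j = l
  · rw [grel (GRel.c1 i j k l hij hkl hlex hsh h4), phi_smul, ev1_qi, map_one, one_mul]
  · push_neg at hsh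
    obtain ⟨hik, hil, hjk, hjl⟩ := hsh
    have hik' : i < k := by
      rcases hlex with h | ⟨h, _⟩
      · exact h
      · exact absurd h hik
    rcases lt_trichotomy j k with hjk' | hjk' | hjk'
    · rw [grel (GRel.c2 i j k l hij hjk' hkl), phi_smul, ev1_qi2, map_one, one_mul]
    · exact absurd hjk' hjk
    · rcases lt_trichotomy j l with hjl' | hjl' | hjl'
      · rw [grel (GRel.c3 i j k l hik' hjk' hjl'), map_sub, phi_smul, phi_smul,
          ev1_qi2, ev1_qd, map_one, map_zero, one_mul, zero_mul]
        exact @sub_zero GrqAtOne _ _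
      · exact absurd hjl' hjl
      · exact grel (GRel.c4 i j k l hik' hkl hjl')

lemma phi_comm (i j k l : Fin 5) (hij : i < j) (hkl : k < l) (h4 : ¬(j = 4 ∧ l = 4)) :
    Commute (φ (X i j)) (φ (X k l))  := by
  rcases lt_trichotomy i k with h | h | h
  · have h2 := phi_comm_aux i j k l hij hkl (Or.inl h) h4
    rw [map_mul, map_mul] at h2; exact h2
  · rcases lt_trichotomy j l with h' | h' | h'
    · have h2 := phi_comm_aux i j k l hij hkl (Or.inr ⟨h, h'⟩) h4
      rw [map_mul, map_mul] at h2; exact h2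
    · subst h; subst h'; exact Commute.refl _
    · have h2 := phi_comm_aux k l i j hkl hij (Or.inr ⟨h.symm, h'⟩)
        (fun hh => h4 ⟨hh.2, hh.1⟩)
      rw [map_mul, map_mul] at h2; exact h2.symm
  · have h2 := phi_comm_aux k l i j hkl hij (Or.inl h) (fun hh => h4 ⟨hh.2, hh.1⟩)
    rw [map_mul, map_mul] at h2; exact h2.symm

lemma phi_comm5 (i j : Fin 5) (hij : i < j) : Commute (φ (X i j)) (φ X5) := by
  by_cases hj : j = 4
  · subst hj
    have hi : i ≠ 4 := ne4_of_lt hij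
    have h1 := grel (GRel.c7a i hi)
    have h2 := grel (GRel.c7b i hi)
    rw [map_mul, map_zero] at h1 h2
    unfold Commute SemiconjBy
    rw [h1, h2]
  · have h2 := grel (GRel.c5 i j hij hj)
    rwa [phi_smul, ev1_qi2, map_one, one_mul, map_mul, map_mul] at h2

lemma phi_acomm (i j : Fin 5) (hi : i ≠ 4) (hj : j ≠ 4) :
    φ (X i 4) * φ (X j 4) = -(φ (X j 4) * φ (X i 4)) := by
  rcases lt_trichotomy i j with h | h | h
  · have h2 := grel (GRel.c6 i j h hj)
    rwa [map_mul, map_neg, phi_smul, ev1_qc, map_one, one_mul, map_mul] at h2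
  · subst h
    have h2 := grel (GRel.c6sq i hi)
    rw [map_mul, map_zero] at h2
    rw [h2]; exact (@neg_zero GrqAtOne _).symm
  · have h2 := grel (GRel.c6 j i h hi)
    rw [map_mul, map_neg, phi_smul, ev1_qc, map_one, one_mul, map_mul] at h2
    rw [h2]; exact (@neg_neg GrqAtOne _ _).symm

lemma phi_oddsq (i : Fin 5) (hi : i ≠ 4) : φ (X i 4) * φ (X i 4) = 0 := by
  have h2 := grel (GRel.c6sq i hi)
  rwa [map_mul, map_zero] at h2

lemma phi_p4 (i : Fin 5) (hi : i ≠ 4) : φ (X i 4) * φ X5 = 0 := by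
  have h2 := grel (GRel.c7a i hi)
  rwa [map_mul, map_zero] at h2

lemma phi_p1 :
    φ (X 0 1) * φ (X 2 3) - φ (X 0 2) * φ (X 1 3) + φ (X 0 3) * φ (X 1 2) = 0 := by
  have h2 := grel GRel.p1
  rwa [map_add, map_sub, map_mul, phi_smul, phi_smul, ev1_qi, ev1_qi2, map_one,
    one_mul, one_mul, map_mul, map_mul, map_zero] at h2

lemma phi_p2 (i j k : Fin 5) (hij : i < j) (hjk : j < k) (hk : k ≠ 4) :
    φ (X i j) * φ (X k 4) - φ (X i k) * φ (X j 4) + φ (X j k) * φ (X i 4) = 0 := by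
  have h2 := grel (GRel.p2 i j k hij hjk hk)
  rw [map_add, map_sub, map_mul, phi_smul, phi_smul, ev1_qi, ev1_qi2, map_one,
    one_mul, one_mul, map_mul, map_mul, map_zero] at h2
  have hc : Commute (φ (X i 4)) (φ (X j k)) :=
    phi_comm i 4 j k (lt4_of_lt hij) hjk (fun hh => hk hh.2)
  rwa [hc.eq] at h2

lemma phi_p3 (i j : Fin 5) (hij : i < j) (hj : j ≠ 4) :
    φ (X i 4) * φ (X j 4) = φ X5 * φ (X i j) := by
  have h2 := grel (GRel.p3 i j hij hj)
  rw [map_mul, phi_smul, ev1_qc, map_one, one_mul, map_mul] at h2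
  rw [h2]
  exact phi_comm5 i j hij

/-! ### The classical side -/

/-- The projection onto O(Gr). -/
def ψ : FC →+* OGr := RingQuot.mkRingHom CRel

lemma crel {x y : FC} (h : CRel x y) : ψ x = ψ y := RingQuot.mkRingHom_rel h

lemma psi_algC (c : ℂ) : ψ (algebraMap ℂ FC c) = algebraMap ℂ OGr c := by
  have h : ψ (algebraMap ℂ FC c) = RingQuot.mkAlgHom ℂ CRel (algebraMap ℂ FC c) :=
    (RingHom.congr_fun (RingQuot.mkAlgHom_coe ℂ CRel) _).symm
  rw [h, AlgHom.commutes]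

lemma psi_comm (i j k l : Fin 5) (hij : i < j) (hkl : k < l) (h4 : ¬(j = 4 ∧ l = 4)) :
    ψ (Y i j) * ψ (Y k l) = ψ (Y k l) * ψ (Y i j) := by
  have h := crel (CRel.comm i j k l hij hkl h4)
  rwa [map_mul, map_mul] at h

lemma psi_comm5 (i j : Fin 5) (hij : i < j) : ψ (Y i j) * ψ Y5 = ψ Y5 * ψ (Y i j) := by
  have h := crel (CRel.comm5 i j hij)
  rwa [map_mul, map_mul] at h

lemma psi_acomm (i j : Fin 5) (hi : i ≠ 4) (hj : j ≠ 4) :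
    ψ (Y i 4) * ψ (Y j 4) = -(ψ (Y j 4) * ψ (Y i 4)) := by
  have h := crel (CRel.acomm i j hi hj)
  rwa [map_mul, map_neg, map_mul] at h

lemma psi_oddsq (i : Fin 5) (hi : i ≠ 4) : ψ (Y i 4) * ψ (Y i 4) = 0 := by
  have h := crel (CRel.oddsq i hi)
  rwa [map_mul, map_zero] at h

lemma psi_p1 :
    ψ (Y 0 1) * ψ (Y 2 3) - ψ (Y 0 2) * ψ (Y 1 3) + ψ (Y 0 3) * ψ (Y 1 2) = 0 := by
  have h := crel CRel.p1
  rwa [map_add, map_sub, map_mul, map_mul, map_mul, map_zero] at h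

lemma psi_p2 (i j k : Fin 5) (hij : i < j) (hjk : j < k) (hk : k ≠ 4) :
    ψ (Y i j) * ψ (Y k 4) - ψ (Y i k) * ψ (Y j 4) + ψ (Y j k) * ψ (Y i 4) = 0 := by
  have h := crel (CRel.p2 i j k hij hjk hk)
  rwa [map_add, map_sub, map_mul, map_mul, map_mul, map_zero] at h

lemma psi_p3 (i j : Fin 5) (hij : i < j) (hj : j ≠ 4) :
    ψ (Y i 4) * ψ (Y j 4) = ψ Y5 * ψ (Y i j) := by
  have h := crel (CRel.p3 i j hij hj)
  rwa [map_mul, map_mul] at h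

lemma psi_p4 (i : Fin 5) (hi : i ≠ 4) : ψ (Y i 4) * ψ Y5 = 0 := by
  have h := crel (CRel.p4 i hi)
  rwa [map_mul, map_zero] at h

/-- O(Gr) as an algebra over ℂ[q,q⁻¹], via evaluation at q = 1. -/
instance : Algebra kq OGr :=
  RingHom.toAlgebra' ((algebraMap ℂ OGr).comp ev1.toRingHom)
    (fun c x => Algebra.commutes (ev1 c) x)

lemma algkqOGr (a : kq) : algebraMap kq OGr a = algebraMap ℂ OGr (ev1 a) := rfl

/-- The map Gr_q → O(Gr) on the free algebra. -/
def F0 : FG →ₐ[kq] OGr :=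
  FreeAlgebra.lift kq (fun g => ψ (FreeAlgebra.ι ℂ g))

lemma F0_ι (g : GIdx) : F0 (FreeAlgebra.ι kq g) = ψ (FreeAlgebra.ι ℂ g) :=
  FreeAlgebra.lift_ι_apply _ _

lemma F0_X (i j : Fin 5) : F0 (X i j) = ψ (Y i j) := by
  by_cases h : i < j
  · rw [X, Y, dif_pos h, dif_pos h]; exact F0_ι _
  · rw [X, Y, dif_neg h, dif_neg h, map_zero, map_zero]

lemma F0_X5 : F0 X5 = ψ Y5 := F0_ι _

lemma F0_smul (a : kq) (x : FG) :
    F0 (a • x) = algebraMap ℂ OGr (ev1 a) * F0 x := by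
  rw [map_smul, Algebra.smul_def, algkqOGr]

lemma hF : ∀ ⦃x y : FG⦄, GRel1 x y → F0 x = F0 y := by
  rintro x y (h | ⟨rfl, rfl⟩)
  · cases h with
    | c1 i j k l hij hkl hlex hsh h4 =>
        rw [map_mul, F0_smul, ev1_qi, map_one, one_mul, map_mul, F0_X, F0_X]
        exact psi_comm i j k l hij hkl h4
    | c2 i j k l hij hjk hkl =>
        rw [map_mul, F0_smul, ev1_qi2, map_one, one_mul, map_mul, F0_X, F0_X]
        exact psi_comm i j k l hij hkl (fun hh => (ne4_of_lt hjk) hh.1)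
    | c3 i j k l hik hkj hjl =>
        rw [map_sub, F0_smul, F0_smul, ev1_qi2, ev1_qd, map_one, map_zero,
          one_mul, zero_mul, map_mul, map_mul, F0_X, F0_X]
        exact (psi_comm i j k l (hik.trans hkj) (hkj.trans hjl)
          (fun hh => (ne4_of_lt hjl) hh.1)).trans (@sub_zero OGr _ _).symm
    | c4 i j k l hik hkl hlj =>
        rw [map_mul, map_mul, F0_X, F0_X]
        exact psi_comm i j k l (hik.trans (hkl.trans hlj)) hkl
          (fun hh => (ne4_of_lt hlj) hh.2)
    | c5 i j hij hj =>
        rw [map_mul, F0_smul, ev1_qi2, map_one, one_mul, map_mul, F0_X, F0_X5]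
        exact psi_comm5 i j hij
    | c6 i j hij hj =>
        rw [map_mul, map_neg, F0_smul, ev1_qc, map_one, one_mul, map_mul, F0_X, F0_X]
        exact psi_acomm i j (ne4_of_lt hij) hj
    | c6sq i hi =>
        rw [map_mul, map_zero, F0_X]
        exact psi_oddsq i hi
    | c7a i hi =>
        rw [map_mul, map_zero, F0_X, F0_X5]
        exact psi_p4 i hi
    | c7b i hi =>
        rw [map_mul, map_zero, F0_X, F0_X5]
        rw [← psi_comm5 i 4 (lt4_of_ne hi)]
        exact psi_p4 i hi
    | p1 =>
        rw [map_zero, map_add, map_sub, map_mul, F0_smul, F0_smul, ev1_qi, ev1_qi2,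
          map_one, one_mul, one_mul, map_mul, map_mul, F0_X, F0_X, F0_X, F0_X, F0_X, F0_X]
        exact psi_p1
    | p2 i j k hij hjk hk =>
        rw [map_zero, map_add, map_sub, map_mul, F0_smul, F0_smul, ev1_qi, ev1_qi2,
          map_one, one_mul, one_mul, map_mul, map_mul, F0_X, F0_X, F0_X, F0_X, F0_X, F0_X,
          psi_comm i 4 j k (lt4_of_lt hij) hjk (fun hh => hk hh.2)]
        exact psi_p2 i j k hij hjk hk
    | p3 i j hij hj =>
        rw [map_mul, F0_smul, ev1_qc, map_one, one_mul, map_mul, F0_X, F0_X, F0_X, F0_X5,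
          psi_comm5 i j hij]
        exact psi_p3 i j hij hj
  · rw [map_one, AlgHom.commutes, algkqOGr, ev1_T, map_one]

/-- The induced map Gr_q/(q−1) → O(Gr). -/
def Fq : GrqAtOne →ₐ[kq] OGr := (RingQuot.liftAlgHom kq) ⟨F0, hF⟩

lemma Fq_φ (x : FG) : Fq (φ x) = F0 x := by
  have h : φ x = RingQuot.mkAlgHom kq GRel1 x :=
    (RingHom.congr_fun (RingQuot.mkAlgHom_coe kq GRel1) _).symm
  rw [h]
  exact RingQuot.liftAlgHom_mkAlgHom_apply kq F0 hF x

/-- The map O(Gr) → Gr_q/(q−1) on the free algebra. -/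
def G0 : FC →ₐ[ℂ] GrqAtOne :=
  FreeAlgebra.lift ℂ (fun g => φ (FreeAlgebra.ι kq g))

lemma G0_ι (g : GIdx) : G0 (FreeAlgebra.ι ℂ g) = φ (FreeAlgebra.ι kq g) :=
  FreeAlgebra.lift_ι_apply _ _

lemma G0_Y (i j : Fin 5) : G0 (Y i j) = φ (X i j) := by
  by_cases h : i < j
  · rw [X, Y, dif_pos h, dif_pos h]; exact G0_ι _
  · rw [X, Y, dif_neg h, dif_neg h, map_zero, map_zero]

lemma G0_Y5 : G0 Y5 = φ X5 := G0_ι _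

lemma hG : ∀ ⦃x y : FC⦄, CRel x y → G0 x = G0 y := by
  intro x y h
  cases h with
  | comm i j k l hij hkl h4 =>
      simp only [map_mul, G0_Y]
      exact phi_comm i j k l hij hkl h4
  | comm5 i j hij =>
      simp only [map_mul, G0_Y, G0_Y5]
      exact phi_comm5 i j hij
  | acomm i j hi hj =>
      simp only [map_mul, map_neg, G0_Y]
      exact phi_acomm i j hi hj
  | oddsq i hi =>
      simp only [map_mul, map_zero, G0_Y]
      exact phi_oddsq i hi
  | p1 =>
      simp only [map_add, map_sub, map_mul, map_zero, G0_Y]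
      exact phi_p1
  | p2 i j k hij hjk hk =>
      simp only [map_add, map_sub, map_mul, map_zero, G0_Y]
      exact phi_p2 i j k hij hjk hk
  | p3 i j hij hj =>
      simp only [map_mul, G0_Y, G0_Y5]
      exact phi_p3 i j hij hj
  | p4 i hi =>
      simp only [map_mul, map_zero, G0_Y, G0_Y5]
      exact phi_p4 i hi

/-- The induced map O(Gr) → Gr_q/(q−1). -/
def Gq : OGr →ₐ[ℂ] GrqAtOne := (RingQuot.liftAlgHom ℂ) ⟨G0, hG⟩

lemma Gq_ψ (x : FC) : Gq (ψ x) = G0 x := by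
  have h : ψ x = RingQuot.mkAlgHom ℂ CRel x :=
    (RingHom.congr_fun (RingQuot.mkAlgHom_coe ℂ CRel) _).symm
  rw [h]
  exact RingQuot.liftAlgHom_mkAlgHom_apply ℂ G0 hG x

lemma FGq_id (x : FC) : Fq (Gq (ψ x)) = ψ x := by
  rw [Gq_ψ]
  induction x using FreeAlgebra.induction with
  | grade0 c =>
      rw [AlgHom.commutes, ← phi_algC, IsScalarTower.algebraMap_apply ℂ kq FG,
        Fq_φ, AlgHom.commutes, algkqOGr, ev1_algebraMap, psi_algC]
  | grade1 g =>
      rw [G0_ι, Fq_φ, F0_ι]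
  | mul a b ha hb => rw [map_mul, map_mul, map_mul, ha, hb]
  | add a b ha hb => rw [map_add, map_add, map_add, ha, hb]

lemma GFq_id (x : FG) : Gq (Fq (φ x)) = φ x := by
  rw [Fq_φ]
  induction x using FreeAlgebra.induction with
  | grade0 a =>
      rw [AlgHom.commutes, algkqOGr, AlgHom.commutes, phi_alg]
  | grade1 g =>
      rw [F0_ι, Gq_ψ, G0_ι]
  | mul a b ha hb => rw [map_mul, map_mul, map_mul, ha, hb]
  | add a b ha hb => rw [map_add, map_add, map_add, ha, hb]

/-- The ring isomorphism Gr_q/(q-1) ≃+* O(Gr). -/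
def theEquiv : GrqAtOne ≃+* OGr where
  toFun := Fq
  invFun := Gq
  left_inv := by
    intro x
    obtain ⟨y, rfl⟩ := RingQuot.mkRingHom_surjective GRel1 x
    exact GFq_id y
  right_inv := by
    intro x
    obtain ⟨y, rfl⟩ := RingQuot.mkRingHom_surjective CRel x
    exact FGq_id y
  map_mul' := map_mul Fq
  map_add' := map_add Fq

/-- specializing q = 1, the quantum super Grassmannian becomes
the classical one: Gr_q/(q−1) ≅ O(Gr) as rings, and in Gr_q/(q−1) the images
of the generators supercommute (D_{i5} odd, the rest even) and satisfy the
classical super Plücker relations. -/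
theorem quantum_grassmannian_at_q_one :
    Nonempty (GrqAtOne ≃+* OGr) ∧
    (∀ i j k l : Fin 5, i < j → k < l → ¬(j = 4 ∧ l = 4) →
      Commute (φ (X i j)) (φ (X k l))) ∧
    (∀ i j : Fin 5, i < j → Commute (φ (X i j)) (φ X5)) ∧
    (∀ i j : Fin 5, i ≠ 4 → j ≠ 4 →
      φ (X i 4) * φ (X j 4) = -(φ (X j 4) * φ (X i 4))) ∧
    (φ (X 0 1) * φ (X 2 3) - φ (X 0 2) * φ (X 1 3) + φ (X 0 3) * φ (X 1 2) = 0) ∧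
    (∀ i j k : Fin 5, i < j → j < k → k ≠ 4 →
      φ (X i j) * φ (X k 4) - φ (X i k) * φ (X j 4) + φ (X j k) * φ (X i 4) = 0) ∧
    (∀ i j : Fin 5, i < j → j ≠ 4 →
      φ (X i 4) * φ (X j 4) = φ X5 * φ (X i j)) := by
  exact ⟨⟨theEquiv⟩, phi_comm, phi_comm5, phi_acomm, phi_p1, phi_p2, phi_p3⟩

end
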